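/- The fractal cube K_0 ⊆ ℝ^3 defined by the digit set D_0 = {(2,2,j), (2,j,2), (j,2,2) : j ∈ {0,1,2,3,4}} (the '3D cross' with 13 cubes) satisfies: K_0 is connected. -/

import Mathlib

open Pointwise

noncomputable section

/-- `ℝ^k` with the Euclidean metric. -/
abbrev E (k : ℕ) := EuclideanSpace ℝ (Fin k)

/-- Points of `ℝ^k` all of whose coordinates are integers in `{0, …, n-1}`. -/
def digits (n k : ℕ) : Set (E k) := {x | ∀ i, ∃ m : ℕ, m < n ∧ x i = m}

/-- The unit cube `[0,1]^k`. -/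
def unitCube (k : ℕ) : Set (E k) := {x | ∀ i, x i ∈ Set.Icc (0:ℝ) 1}

/-- The "cross" digit set `D₀`: the 13 points `(2,2,j), (2,j,2), (j,2,2)`, `j ∈ {0,…,4}`. -/
def crossD : Set (E 3) :=
  {x | ∃ j : ℕ, j ≤ 4 ∧ (x = ![2, 2, (j:ℝ)] ∨ x = ![2, (j:ℝ), 2] ∨ x = ![(j:ℝ), 2, 2])}

namespace CrossProof

open Set Metric Filter Topology

/-- The Hutchinson operator. -/
def T (A : Set (E 3)) : Set (E 3) := (5:ℝ)⁻¹ • (A + crossD)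

lemma mem_T {A : Set (E 3)} {x : E 3} :
    x ∈ T A ↔ ∃ a ∈ A, ∃ d ∈ crossD, x = (5:ℝ)⁻¹ • (a + d) := by
  constructor
  · rintro ⟨y, hy, rfl⟩
    rw [Set.mem_add] at hy
    obtain ⟨a, ha, d, hd, rfl⟩ := hy
    exact ⟨a, ha, d, hd, rfl⟩
  · rintro ⟨a, ha, d, hd, rfl⟩
    exact ⟨a + d, Set.add_mem_add ha hd, rfl⟩

lemma T_mono {A B : Set (E 3)} (h : A ⊆ B) : T A ⊆ T B := by
  intro x hx
  rw [mem_T] at hx ⊢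
  obtain ⟨a, ha, d, hd, rfl⟩ := hx
  exact ⟨a, h ha, d, hd, rfl⟩

/-- Indexed digits. -/
def dig (p : Fin 3 × Fin 5) : E 3 :=
  WithLp.toLp 2 (![![2, 2, ((p.2 : ℕ) : ℝ)], ![2, ((p.2 : ℕ) : ℝ), 2], ![((p.2 : ℕ) : ℝ), 2, 2]] p.1)

lemma dig_mem (p : Fin 3 × Fin 5) : dig p ∈ crossD := by
  obtain ⟨i, j⟩ := p
  refine ⟨(j : ℕ), j.is_le, ?_⟩
  fin_cases i
  · left; rfl
  · right; left; rfl
  · right; right; rfl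

lemma crossD_eq : crossD = Set.range dig := by
  apply subset_antisymm
  · rintro x ⟨j, hj, h | h | h⟩
    · exact ⟨(0, ⟨j, by omega⟩), by apply WithLp.ofLp_injective; rw [h]; rfl⟩
    · exact ⟨(1, ⟨j, by omega⟩), by apply WithLp.ofLp_injective; rw [h]; rfl⟩
    · exact ⟨(2, ⟨j, by omega⟩), by apply WithLp.ofLp_injective; rw [h]; rfl⟩
  · rintro x ⟨p, rfl⟩; exact dig_mem p

/-- The piece maps. -/
def f (p : Fin 3 × Fin 5) (x : E 3) : E 3 := (5:ℝ)⁻¹ • (x + dig p)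

lemma f_cont (p : Fin 3 × Fin 5) : Continuous (f p) :=
  by unfold f; fun_prop

lemma T_eq (A : Set (E 3)) : T A = ⋃ p : Fin 3 × Fin 5, f p '' A := by
  ext x
  simp only [mem_T, mem_iUnion, mem_image]
  constructor
  · rintro ⟨a, ha, d, hd, rfl⟩
    rw [crossD_eq] at hd
    obtain ⟨p, rfl⟩ := hd
    exact ⟨p, a, ha, rfl⟩
  · rintro ⟨p, a, ha, rfl⟩
    exact ⟨a, ha, dig p, dig_mem p, rfl⟩

/-- The "core points" invariant: `A` contains `d/4` for every digit `d`. -/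
def core (A : Set (E 3)) : Prop := ∀ p, (4:ℝ)⁻¹ • dig p ∈ A

lemma core_T {A : Set (E 3)} (h : core A) : core (T A) := by
  intro p
  rw [T_eq, mem_iUnion]
  refine ⟨p, (4:ℝ)⁻¹ • dig p, h p, ?_⟩
  show (5:ℝ)⁻¹ • ((4:ℝ)⁻¹ • dig p + dig p) = (4:ℝ)⁻¹ • dig p
  module

lemma T_compact {A : Set (E 3)} (h : IsCompact A) : IsCompact (T A) := by
  rw [T_eq]; exact isCompact_iUnion fun p => h.image (f_cont p)

lemma crossD_bounds {d : E 3} (h : d ∈ crossD) (i : Fin 3) : d i ∈ Set.Icc (0:ℝ) 4 := by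
  obtain ⟨j, hj, h | h | h⟩ := h <;> rw [h] <;> fin_cases i <;>
      simp only [Matrix.cons_val_zero, Matrix.cons_val_one, Matrix.head_cons, Set.mem_Icc,
        Matrix.cons_val_two, Matrix.tail_cons] <;>
    constructor <;> norm_num <;> exact hj

lemma dig_center (i : Fin 3) : dig (i, (2 : Fin 5)) = (WithLp.toLp 2 ![(2:ℝ), 2, 2] : E 3) := by
  fin_cases i <;> · ext c; fin_cases c <;>
    simp [dig, Matrix.vecHead, Matrix.vecTail] <;> norm_num

lemma adj_vec (i : Fin 3) (j k : Fin 5) (h : (k:ℕ) = (j:ℕ) + 1) :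
    (4:ℝ)⁻¹ • dig (i, 4) + dig (i, j) = (4:ℝ)⁻¹ • dig (i, 0) + dig (i, k) := by
  fin_cases i <;> · ext c; fin_cases c <;>
    simp [dig, Matrix.vecHead, Matrix.vecTail, PiLp.add_apply, PiLp.smul_apply,
      (show ((4:Fin 5):ℕ) = 4 from rfl), (show ((0:Fin 5):ℕ) = 0 from rfl)] <;>
    push_cast [h] <;> ring

/-- Connectedness is preserved by `T`, given the core points. -/
lemma T_conn {A : Set (E 3)} (hA : IsConnected A) (hcore : core A) : IsConnected (T A) := by
  rw [T_eq]
  set s : Fin 3 × Fin 5 → Set (E 3) := fun p => f p '' A with hs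
  have hR : ∀ i : Fin 3, ∀ j k : Fin 5, (k:ℕ) = (j:ℕ) + 1 →
      (s (i, j) ∩ s (i, k)).Nonempty := by
    intro i j k h
    refine ⟨f (i, j) ((4:ℝ)⁻¹ • dig (i, 4)), ⟨_, hcore (i, 4), rfl⟩, ⟨(4:ℝ)⁻¹ • dig (i, 0),
      hcore (i, 0), ?_⟩⟩
    show (5:ℝ)⁻¹ • _ = (5:ℝ)⁻¹ • _
    rw [← adj_vec i j k h]
  set R : Fin 3 × Fin 5 → Fin 3 × Fin 5 → Prop := fun p q => (s p ∩ s q).Nonempty with hRdef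
  have hsym : Symmetric R := fun p q h => by
    show (s q ∩ s p).Nonempty
    rw [Set.inter_comm]; exact h
  have hcen : ∀ i i' : Fin 3, R (i, 2) (i', 2) := by
    intro i i'
    refine ⟨f (i, 2) ((4:ℝ)⁻¹ • dig (0, 2)), ⟨_, hcore (0, 2), rfl⟩,
      ⟨(4:ℝ)⁻¹ • dig (0, 2), hcore (0, 2), ?_⟩⟩
    show (5:ℝ)⁻¹ • _ = (5:ℝ)⁻¹ • _
    rw [dig_center i', dig_center i]
  have step : ∀ (i : Fin 3) (j k : Fin 5), (k:ℕ) = (j:ℕ) + 1 → R (i, j) (i, k) :=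
    fun i j k h => hR i j k h
  have toCen : ∀ (i : Fin 3) (j : Fin 5), Relation.ReflTransGen R (i, j) (i, 2) := by
    intro i j
    fin_cases j
    · exact (Relation.ReflTransGen.single (step i 0 1 (by decide))).tail (step i 1 2 (by decide))
    · exact Relation.ReflTransGen.single (step i 1 2 (by decide))
    · exact Relation.ReflTransGen.refl
    · exact Relation.ReflTransGen.single (hsym (step i 2 3 (by decide)))
    · exact (Relation.ReflTransGen.single (hsym (step i 3 4 (by decide)))).tail
        (hsym (step i 2 3 (by decide)))
  have hRT : ∀ p q : Fin 3 × Fin 5, Relation.ReflTransGen R p q := by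
    intro ⟨i, j⟩ ⟨i', j'⟩
    have h1 := toCen i j
    have h2 : Relation.ReflTransGen R (i', 2) (i', j') :=
      (haveI : Std.Symm R := ⟨fun a b h => hsym h⟩; Std.Symm.symm _ _ (toCen i' j'))
    exact (h1.tail (hcen i i')).trans h2
  exact IsConnected.iUnion_of_reflTransGen
    (fun p => hA.image _ (f_cont p).continuousOn) hRT

/-! ### The unit cube -/

def Q : Set (E 3) := unitCube 3

lemma Q_compact : IsCompact Q := by
  have : Q = (EuclideanSpace.equiv (Fin 3) ℝ).toHomeomorph ⁻¹'
      (Set.univ.pi fun _ => Set.Icc (0:ℝ) 1) := by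
    ext x
    simp only [Q, unitCube, Set.mem_setOf_eq, Set.mem_preimage, Set.mem_pi, Set.mem_univ,
      forall_true_left]
    rfl
  rw [this, Homeomorph.isCompact_preimage]
  exact isCompact_univ_pi fun _ => isCompact_Icc

lemma Q_convex : Convex ℝ Q := by
  intro x hx y hy a b ha hb hab
  intro i
  have := (convex_Icc (0:ℝ) 1) (hx i) (hy i) ha hb hab
  simpa [PiLp.add_apply, PiLp.smul_apply] using this

lemma Q_conn : IsConnected Q :=
  Q_convex.isConnected ⟨0, fun i => by simp⟩

lemma Q_core : core Q := by
  intro p i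
  have hd := crossD_bounds (dig_mem p) i
  have : ((4:ℝ)⁻¹ • dig p) i = (4:ℝ)⁻¹ * dig p i := by
    simp [PiLp.smul_apply]
  rw [this]
  obtain ⟨h0, h4⟩ := hd
  exact ⟨by positivity, by linarith⟩

lemma TQ_sub_Q : T Q ⊆ Q := by
  intro x hx
  rw [mem_T] at hx
  obtain ⟨a, ha, d, hd, rfl⟩ := hx
  intro i
  have h1 := ha i
  have h2 := crossD_bounds hd i
  have : ((5:ℝ)⁻¹ • (a + d)) i = (5:ℝ)⁻¹ * (a i + d i) := by
    simp [PiLp.smul_apply, PiLp.add_apply, mul_add]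
  rw [this]
  obtain ⟨ha0, ha1⟩ := h1
  obtain ⟨hd0, hd4⟩ := h2
  constructor
  · positivity
  · nlinarith

/-! ### The iterates -/

def C (n : ℕ) : Set (E 3) := T^[n] Q

lemma C_succ (n : ℕ) : C (n + 1) = T (C n) := Function.iterate_succ_apply' T n Q

lemma C_compact (n : ℕ) : IsCompact (C n) := by
  induction n with
  | zero => exact Q_compact
  | succ n ih => rw [C_succ]; exact T_compact ih

lemma C_core (n : ℕ) : core (C n) := by
  induction n with
  | zero => exact Q_core
  | succ n ih => rw [C_succ]; exact core_T ih

lemma C_conn (n : ℕ) : IsConnected (C n) := by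
  induction n with
  | zero => exact Q_conn
  | succ n ih => rw [C_succ]; exact T_conn ih (C_core n)

lemma C_sub_Q (n : ℕ) : C n ⊆ Q := by
  induction n with
  | zero => exact subset_rfl
  | succ n ih => rw [C_succ]; exact (T_mono ih).trans TQ_sub_Q

lemma C_antitone : Antitone C := by
  apply antitone_nat_of_succ_le
  intro n
  induction n with
  | zero => rw [C_succ]; exact TQ_sub_Q
  | succ n ih =>
    rw [C_succ n] at ih
    rw [C_succ (n+1), C_succ n]
    exact T_mono ih

/-! ### Intersection of a decreasing family of compact connected sets -/

lemma iInter_preconnected {X : Type*} [MetricSpace X] {C : ℕ → Set X}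
    (hcomp : ∀ n, IsCompact (C n)) (hconn : ∀ n, IsConnected (C n)) (hanti : Antitone C) :
    IsPreconnected (⋂ n, C n) := by
  set K := ⋂ n, C n with hKdef
  rintro U V hU hV hUV ⟨u, huK, huU⟩ ⟨v, hvK, hvV⟩
  by_contra hK
  have hdisj : ∀ x ∈ K, x ∈ U → x ∉ V := by
    intro x hx hxU hxV
    exact hK ⟨x, hx, hxU, hxV⟩
  have hKc : IsClosed K := isClosed_iInter fun n => (hcomp n).isClosed
  set A := K ∩ U with hA
  set B := K ∩ V with hB
  have hAclosed : IsClosed A := by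
    have : A = K ∩ Vᶜ := by
      ext x
      constructor
      · rintro ⟨hx, hxU⟩; exact ⟨hx, hdisj x hx hxU⟩
      · rintro ⟨hx, hxV⟩
        rcases hUV hx with h | h
        · exact ⟨hx, h⟩
        · exact absurd h hxV
    rw [this]
    exact hKc.inter hV.isClosed_compl
  have hBclosed : IsClosed B := by
    have : B = K ∩ Uᶜ := by
      ext x
      constructor
      · rintro ⟨hx, hxV⟩
        exact ⟨hx, fun hxU => hdisj x hx hxU hxV⟩
      · rintro ⟨hx, hxU⟩
        rcases hUV hx with h | h
        · exact absurd h hxU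
        · exact ⟨hx, h⟩
    rw [this]
    exact hKc.inter hU.isClosed_compl
  have hKcomp : IsCompact K := (hcomp 0).of_isClosed_subset hKc (iInter_subset _ 0)
  have hAcomp : IsCompact A := hKcomp.of_isClosed_subset hAclosed inter_subset_left
  have hABdisj : Disjoint A B := by
    rw [Set.disjoint_iff]
    rintro x ⟨⟨hx, hxU⟩, ⟨_, hxV⟩⟩
    exact hdisj x hx hxU hxV
  obtain ⟨δ, hδ, hUV'⟩ := hABdisj.exists_thickenings hAcomp hBclosed
  have hcover : K ⊆ thickening δ A ∪ thickening δ B := by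
    intro x hx
    rcases hUV hx with h | h
    · exact Or.inl (self_subset_thickening hδ A ⟨hx, h⟩)
    · exact Or.inr (self_subset_thickening hδ B ⟨hx, h⟩)
  have hex : ∃ n, C n ⊆ thickening δ A ∪ thickening δ B := by
    by_contra h
    push_neg at h
    set D : ℕ → Set X := fun n => C n ∩ (thickening δ A ∪ thickening δ B)ᶜ with hD
    have hDclosed : ∀ n, IsClosed (D n) := fun n =>
      (hcomp n).isClosed.inter (isOpen_thickening.union isOpen_thickening).isClosed_compl
    have hDcomp : ∀ n, IsCompact (D n) := fun n =>
      (hcomp n).of_isClosed_subset (hDclosed n) inter_subset_left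
    have hDne : ∀ n, (D n).Nonempty := by
      intro n
      obtain ⟨x, hx1, hx2⟩ := not_subset.1 (h n)
      exact ⟨x, hx1, hx2⟩
    have hDanti : Antitone D := fun m n hmn =>
      inter_subset_inter_left _ (hanti hmn)
    obtain ⟨x, hx⟩ := IsCompact.nonempty_iInter_of_directed_nonempty_isCompact_isClosed
      D hDanti.directed_ge hDne hDcomp hDclosed
    have hxK : x ∈ K := mem_iInter.2 fun n => (mem_iInter.1 hx n).1
    exact (mem_iInter.1 hx 0).2 (hcover hxK)
  obtain ⟨n, hn⟩ := hex
  have hKsub : K ⊆ C n := iInter_subset _ n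
  have h1 : (C n ∩ thickening δ A).Nonempty :=
    ⟨u, hKsub huK, self_subset_thickening hδ A ⟨huK, huU⟩⟩
  have h2 : (C n ∩ thickening δ B).Nonempty :=
    ⟨v, hKsub hvK, self_subset_thickening hδ B ⟨hvK, hvV⟩⟩
  obtain ⟨y, _, hy1, hy2⟩ := (hconn n).isPreconnected _ _ isOpen_thickening isOpen_thickening
    hn h1 h2
  exact Set.disjoint_iff.1 hUV' ⟨hy1, hy2⟩

/-! ### `K₀` inside the iterates -/

lemma K_sub_Q {K₀ : Set (E 3)} (hne : K₀.Nonempty) (hc : IsCompact K₀)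
    (hattr : K₀ = T K₀) : K₀ ⊆ Q := by
  intro x hx i
  set g : E 3 → ℝ := fun y => y i with hg
  have hgc : Continuous g := (EuclideanSpace.proj (𝕜 := ℝ) i).continuous
  set S := g '' K₀ with hS
  have hSc : IsCompact S := hc.image hgc
  have hSne : S.Nonempty := hne.image g
  have hbddA : BddAbove S := hSc.bddAbove
  have hbddB : BddBelow S := hSc.bddBelow
  have key : ∀ y ∈ S, ∃ a ∈ K₀, ∃ d, d ∈ crossD ∧ y = (5:ℝ)⁻¹ * (a i + d i) := by
    rintro y ⟨z, hz, rfl⟩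
    rw [hattr, mem_T] at hz
    obtain ⟨a, ha, d, hd, rfl⟩ := hz
    refine ⟨a, ?_, d, hd, ?_⟩
    · rw [hattr]; rw [hattr, mem_T] at ha; rwa [mem_T]
    · show ((5:ℝ)⁻¹ • (a + d)) i = _
      simp [PiLp.smul_apply, PiLp.add_apply, mul_add]
  have h1 : sSup S ≤ 1 := by
    obtain ⟨a, ha, d, hd, heq⟩ := key (sSup S) (hSc.sSup_mem hSne)
    have haS : a i ≤ sSup S := le_csSup hbddA ⟨a, ha, rfl⟩
    have hdle := (crossD_bounds hd i).2
    linarith [heq]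
  have h0 : 0 ≤ sInf S := by
    obtain ⟨a, ha, d, hd, heq⟩ := key (sInf S) (hSc.sInf_mem hSne)
    have haS : sInf S ≤ a i := csInf_le hbddB ⟨a, ha, rfl⟩
    have hdge := (crossD_bounds hd i).1
    linarith [heq]
  exact ⟨le_trans h0 (csInf_le hbddB ⟨x, hx, rfl⟩),
    le_trans (le_csSup hbddA ⟨x, hx, rfl⟩) h1⟩

lemma K_sub_C {K₀ : Set (E 3)} (hne : K₀.Nonempty) (hc : IsCompact K₀)
    (hattr : K₀ = T K₀) (n : ℕ) : K₀ ⊆ C n := by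
  induction n with
  | zero => exact K_sub_Q hne hc hattr
  | succ n ih =>
    intro x hx
    rw [C_succ]
    rw [hattr] at hx
    exact T_mono ih hx

lemma Q_norm {x : E 3} (hx : x ∈ Q) : ‖x‖ ≤ 2 := by
  rw [EuclideanSpace.norm_eq]
  have hsum : ∑ i, ‖x i‖ ^ 2 ≤ 4 := by
    rw [Fin.sum_univ_three]
    have b : ∀ i : Fin 3, ‖x i‖ ^ 2 ≤ 1 := by
      intro i
      obtain ⟨h0, h1⟩ := hx i
      rw [Real.norm_eq_abs, sq_abs]
      nlinarith
    linarith [b 0, b 1, b 2]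
  calc Real.sqrt (∑ i, ‖x i‖ ^ 2) ≤ Real.sqrt 4 := Real.sqrt_le_sqrt hsum
    _ = 2 := by
        rw [show (4:ℝ) = 2 ^ 2 by norm_num, Real.sqrt_sq (by norm_num)]

lemma approx {K₀ : Set (E 3)} (hattr : K₀ = T K₀) {k₀ : E 3} (hk₀ : k₀ ∈ K₀) :
    ∀ n, ∀ x ∈ C n, ∃ k ∈ K₀, dist x k ≤ (5:ℝ)⁻¹ ^ n * (2 + ‖k₀‖) := by
  intro n
  induction n with
  | zero =>
    intro x hx
    refine ⟨k₀, hk₀, ?_⟩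
    have h2 := Q_norm hx
    calc dist x k₀ = ‖x - k₀‖ := dist_eq_norm x k₀
      _ ≤ ‖x‖ + ‖k₀‖ := norm_sub_le x k₀
      _ ≤ 2 + ‖k₀‖ := by linarith
      _ = (5:ℝ)⁻¹ ^ 0 * (2 + ‖k₀‖) := by ring
  | succ n ih =>
    intro x hx
    rw [C_succ, mem_T] at hx
    obtain ⟨a, ha, d, hd, rfl⟩ := hx
    obtain ⟨k, hk, hdist⟩ := ih a ha
    refine ⟨(5:ℝ)⁻¹ • (k + d), ?_, ?_⟩
    · rw [hattr, mem_T]; exact ⟨k, hk, d, hd, rfl⟩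
    · have heq : dist ((5:ℝ)⁻¹ • (a + d)) ((5:ℝ)⁻¹ • (k + d)) = (5:ℝ)⁻¹ * dist a k := by
        rw [dist_eq_norm, dist_eq_norm]
        have : (5:ℝ)⁻¹ • (a + d) - (5:ℝ)⁻¹ • (k + d) = (5:ℝ)⁻¹ • (a - k) := by module
        rw [this, norm_smul]
        norm_num
      rw [heq]
      calc (5:ℝ)⁻¹ * dist a k ≤ (5:ℝ)⁻¹ * ((5:ℝ)⁻¹ ^ n * (2 + ‖k₀‖)) := by
            apply mul_le_mul_of_nonneg_left hdist; norm_num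
        _ = (5:ℝ)⁻¹ ^ (n + 1) * (2 + ‖k₀‖) := by ring

end CrossProof

/-- The fractal cube `K₀ ⊆ ℝ³` with digit set the 3D cross `D₀`
(the attractor of `A ↦ (A + D₀)/5`) is connected. -/
theorem crossFractal_connected (K₀ : Set (E 3)) (hne : K₀.Nonempty) (hc : IsCompact K₀)
    (hattr : K₀ = (5:ℝ)⁻¹ • (K₀ + crossD)) :
    IsConnected K₀ := by
  open CrossProof Metric Filter in
  have hT : K₀ = CrossProof.T K₀ := hattr
  obtain ⟨k₀, hk₀⟩ := hne
  have hKC : K₀ = ⋂ n, C n := by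
    apply subset_antisymm
    · exact Set.subset_iInter (K_sub_C ⟨k₀, hk₀⟩ hc hT)
    · intro x hx
      have h0 : ∀ n, infDist x K₀ ≤ (5:ℝ)⁻¹ ^ n * (2 + ‖k₀‖) := by
        intro n
        obtain ⟨k, hk, hd⟩ := approx hT hk₀ n x (Set.mem_iInter.1 hx n)
        exact (infDist_le_dist_of_mem hk).trans hd
      have hlim : Tendsto (fun n => (5:ℝ)⁻¹ ^ n * (2 + ‖k₀‖)) atTop (nhds 0) := by
        have := (tendsto_pow_atTop_nhds_zero_of_lt_one
          (by norm_num : (0:ℝ) ≤ 5⁻¹) (by norm_num)).mul_const (2 + ‖k₀‖)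
        simpa using this
      have hle : infDist x K₀ ≤ 0 := ge_of_tendsto hlim (Filter.Eventually.of_forall h0)
      have h0' : infDist x K₀ = 0 := le_antisymm hle infDist_nonneg
      exact (hc.isClosed.mem_iff_infDist_zero ⟨k₀, hk₀⟩).2 h0'
  refine ⟨⟨k₀, hk₀⟩, ?_⟩
  rw [hKC]
  exact iInter_preconnected C_compact C_conn C_antitone
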